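/- For every x ∈ ℝ^D with x ≠ 0, m > 0, and D ≥ 2, the function G(x) = (4π)^{-D/2} ∫₀^∞ t^{-D/2} e^{-t m² - ‖x‖²/(4t)} dt satisfies the bound |G(x)|² ≤ (2^{D-1}/(4π)^D) · ((D-2)!/(2m²)) · ‖x‖^{-2D+2}. In particular, G(x) → 0 as ‖x‖ → ∞ when D > 1. -/

import Mathlib

open MeasureTheory Real Set Filter

private lemma my_int_sq (D : ℕ) (hD : 2 ≤ D) (c : ℝ) (hc : 0 < c) :
    IntegrableOn (fun t : ℝ => t ^ (-(D : ℝ)) * Real.exp (-(c / 2) * t⁻¹)) (Ioi 0) ∧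
    ∫ t in Ioi (0 : ℝ), t ^ (-(D : ℝ)) * Real.exp (-(c / 2) * t⁻¹)
      = (2 / c) ^ ((D : ℝ) - 1) * ((D - 2).factorial : ℝ) := by
  have hb : (0 : ℝ) < c / 2 := by positivity
  set h : ℝ → ℝ := fun y => y ^ ((D : ℝ) - 2) * Real.exp (-(c / 2) * y) with hh
  have hint : IntegrableOn h (Ioi 0) := by
    have hD' : (2:ℝ) ≤ (D:ℝ) := by exact_mod_cast hD
    have := integrableOn_rpow_mul_exp_neg_mul_rpow (p := 1) (s := (D : ℝ) - 2) (b := c / 2)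
      (by linarith) one_pos hb
    refine this.congr_fun (fun t ht => ?_) measurableSet_Ioi
    beta_reduce; rw [Real.rpow_one]
  have key : ∀ t : ℝ, t ∈ Ioi (0:ℝ) →
      ((|(-1 : ℝ)| * t ^ ((-1 : ℝ) - 1)) • h (t ^ (-1 : ℝ)))
        = t ^ (-(D : ℝ)) * Real.exp (-(c / 2) * t⁻¹) := by
    intro t ht
    have ht' : (0 : ℝ) < t := ht
    have h1 : t ^ ((-1 : ℝ) - 1) = t ^ (-2 : ℝ) := by norm_num
    have h2 : t ^ (-1 : ℝ) = t⁻¹ := Real.rpow_neg_one t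
    have h3 : (t⁻¹ : ℝ) ^ ((D : ℝ) - 2) = t ^ (-((D : ℝ) - 2)) := by
      rw [Real.inv_rpow ht'.le, ← Real.rpow_neg ht'.le]
    simp only [hh, smul_eq_mul, h1, h2, h3, abs_neg, abs_one, one_mul]
    rw [← mul_assoc, ← Real.rpow_add ht']
    ring_nf
  constructor
  · have := (integrableOn_Ioi_comp_rpow_iff h (p := (-1 : ℝ)) (by norm_num)).mpr hint
    exact this.congr_fun (fun t ht => key t ht) measurableSet_Ioi
  · have hD' : (2:ℝ) ≤ (D:ℝ) := by exact_mod_cast hD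
    have heq := integral_comp_rpow_Ioi h (p := (-1 : ℝ)) (by norm_num)
    calc ∫ t in Ioi (0:ℝ), t ^ (-(D : ℝ)) * Real.exp (-(c / 2) * t⁻¹)
        = ∫ t in Ioi (0:ℝ), (|(-1 : ℝ)| * t ^ ((-1 : ℝ) - 1)) • h (t ^ (-1 : ℝ)) :=
          (setIntegral_congr_fun measurableSet_Ioi key).symm
      _ = ∫ y in Ioi (0:ℝ), h y := heq
      _ = ∫ y in Ioi (0:ℝ), y ^ (((D : ℝ) - 1) - 1) * Real.exp (-(c/2 * y)) := by
          refine setIntegral_congr_fun measurableSet_Ioi (fun y hy => ?_)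
          simp only [hh]; ring_nf
      _ = (2 / c) ^ ((D : ℝ) - 1) * ((D - 2).factorial : ℝ) := by
          rw [Real.integral_rpow_mul_exp_neg_mul_Ioi (by linarith) hb, one_div, inv_div]
          congr 1
          have hc2 : ((D : ℝ) - 1) = ((D - 2 : ℕ) : ℝ) + 1 := by
            have := Nat.cast_sub hD (R := ℝ); rw [this]; push_cast; ring
          rw [hc2, Real.Gamma_nat_eq_factorial]

private lemma my_bound (D : ℕ) (hD : 2 ≤ D) (m : ℝ) (hm : 0 < m)
    (x : EuclideanSpace ℝ (Fin D)) (hx : x ≠ 0) :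
    |(4 * π) ^ (-(D : ℝ) / 2) *
        ∫ t in Ioi (0 : ℝ),
          t ^ (-(D : ℝ) / 2) * Real.exp (-t * m ^ 2 - ‖x‖ ^ 2 / (4 * t))| ^ 2 ≤
      2 ^ (D - 1) / (4 * π) ^ D * (((D - 2).factorial : ℝ) / (2 * m ^ 2)) *
        ‖x‖ ^ (-2 * (D : ℝ) + 2) := by
  have hnx : 0 < ‖x‖ := norm_pos_iff.mpr hx
  set c : ℝ := ‖x‖ ^ 2 with hcdef
  have hc : 0 < c := by positivity
  set f : ℝ → ℝ := fun t => Real.exp (-(m ^ 2) * t) with hf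
  set g : ℝ → ℝ := fun t => t ^ (-(D : ℝ) / 2) * Real.exp (-(c / 4) * t⁻¹) with hg
  have hfg : ∀ t ∈ Ioi (0 : ℝ),
      t ^ (-(D : ℝ) / 2) * Real.exp (-t * m ^ 2 - ‖x‖ ^ 2 / (4 * t)) = f t * g t := by
    intro t ht
    have ht' : (0 : ℝ) < t := ht
    rw [hf, hg]
    rw [show -t * m ^ 2 - ‖x‖ ^ 2 / (4 * t) = -(m ^ 2) * t + -(c / 4) * t⁻¹ by
      field_simp; ring]
    rw [Real.exp_add]; ring
  -- measurability
  have hfm : AEStronglyMeasurable f (volume.restrict (Ioi 0)) :=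
    (Real.continuous_exp.comp (continuous_const.mul continuous_id)).aestronglyMeasurable
  have hgm : AEStronglyMeasurable g (volume.restrict (Ioi 0)) := by
    refine ContinuousOn.aestronglyMeasurable ?_ measurableSet_Ioi
    refine ContinuousOn.mul ?_ ?_
    · exact continuousOn_id.rpow_const fun t ht => Or.inl (ne_of_gt ht)
    · exact Real.continuous_exp.comp_continuousOn
        (continuousOn_const.mul (continuousOn_id.inv₀ fun t ht => ne_of_gt ht))
  -- L² membership
  have hfsq : IntegrableOn (fun t => f t ^ (2:ℕ)) (Ioi 0) := by
    refine (exp_neg_integrableOn_Ioi 0 (show (0:ℝ) < 2 * m ^ 2 by positivity)).congr_fun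
      (fun t ht => ?_) measurableSet_Ioi
    rw [hf]; simp only [sq, ← Real.exp_add]; ring_nf
  have hgsq : IntegrableOn (fun t => g t ^ (2:ℕ)) (Ioi 0) := by
    refine (my_int_sq D hD c hc).1.congr_fun (fun t ht => ?_) measurableSet_Ioi
    have ht' : (0 : ℝ) < t := ht
    have e1 : (t ^ (-(D:ℝ)/2)) ^ (2:ℕ) = t ^ (-(D:ℝ)) := by
      rw [sq, ← Real.rpow_add ht']; norm_num
    have e2 : Real.exp (-(c/4) * t⁻¹) ^ (2:ℕ) = Real.exp (-(c/2) * t⁻¹) := by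
      rw [sq, ← Real.exp_add]; ring_nf
    rw [hg]; rw [mul_pow, e1, e2]
  have hfL : MemLp f (ENNReal.ofReal 2) (volume.restrict (Ioi 0)) := by
    rw [ENNReal.ofReal_ofNat]
    exact (memLp_two_iff_integrable_sq hfm).mpr hfsq
  have hgL : MemLp g (ENNReal.ofReal 2) (volume.restrict (Ioi 0)) := by
    rw [ENNReal.ofReal_ofNat]
    exact (memLp_two_iff_integrable_sq hgm).mpr hgsq
  have hf0 : 0 ≤ᵐ[volume.restrict (Ioi 0)] f :=
    Eventually.of_forall fun t => Real.exp_nonneg _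
  have hg0 : 0 ≤ᵐ[volume.restrict (Ioi 0)] g := by
    refine (ae_restrict_iff' measurableSet_Ioi).mpr (Eventually.of_forall fun t ht => ?_)
    exact mul_nonneg (Real.rpow_nonneg (le_of_lt ht) _) (Real.exp_nonneg _)
  have hpq : Real.HolderConjugate 2 2 := Real.holderConjugate_iff.mpr ⟨one_lt_two, by norm_num⟩
  have hCS := integral_mul_le_Lp_mul_Lq_of_nonneg hpq hf0 hg0 hfL hgL
  -- compute the two integrals
  have hA : ∫ t in Ioi (0:ℝ), f t ^ (2:ℝ) = 1 / (2 * m ^ 2) := by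
    have h2 := Real.integral_rpow_mul_exp_neg_mul_Ioi (a := 1) one_pos
      (show (0:ℝ) < 2 * m ^ 2 by positivity)
    rw [show ∫ t in Ioi (0:ℝ), f t ^ (2:ℝ)
        = ∫ t in Ioi (0:ℝ), t ^ ((1:ℝ)-1) * Real.exp (-(2 * m ^ 2 * t)) from
      setIntegral_congr_fun measurableSet_Ioi fun t ht => by
        rw [hf, Real.rpow_two, show ((1:ℝ)-1) = 0 by norm_num, Real.rpow_zero, one_mul,
          sq, ← Real.exp_add]
        congr 1; ring]
    rw [h2, Real.Gamma_one, Real.rpow_one, mul_one]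
  have hB : ∫ t in Ioi (0:ℝ), g t ^ (2:ℝ)
      = (2 / c) ^ ((D : ℝ) - 1) * ((D - 2).factorial : ℝ) := by
    rw [← (my_int_sq D hD c hc).2]
    refine setIntegral_congr_fun measurableSet_Ioi fun t ht => ?_
    have ht' : (0 : ℝ) < t := ht
    have e1 : (t ^ (-(D:ℝ)/2)) ^ (2:ℕ) = t ^ (-(D:ℝ)) := by
      rw [sq, ← Real.rpow_add ht']; norm_num
    have e2 : Real.exp (-(c/4) * t⁻¹) ^ (2:ℕ) = Real.exp (-(c/2) * t⁻¹) := by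
      rw [sq, ← Real.exp_add]; ring_nf
    rw [hg, Real.rpow_two, mul_pow, e1, e2]
  -- combine
  set F : ℝ := ((D - 2).factorial : ℝ) with hF
  have hF0 : 0 ≤ F := by positivity
  have hIeq : (∫ t in Ioi (0:ℝ),
      t ^ (-(D : ℝ) / 2) * Real.exp (-t * m ^ 2 - ‖x‖ ^ 2 / (4 * t)))
      = ∫ t in Ioi (0:ℝ), f t * g t :=
    setIntegral_congr_fun measurableSet_Ioi hfg
  have hI0 : 0 ≤ ∫ t in Ioi (0:ℝ), f t * g t := by
    refine setIntegral_nonneg measurableSet_Ioi fun t ht => ?_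
    exact mul_nonneg (Real.exp_nonneg _)
      (mul_nonneg (Real.rpow_nonneg (le_of_lt ht) _) (Real.exp_nonneg _))
  rw [hA, hB] at hCS
  have hsqr : ∀ a : ℝ, 0 ≤ a → (a ^ ((1:ℝ)/2)) ^ (2:ℕ) = a := fun a ha => by
    rw [← Real.rpow_natCast (a ^ ((1:ℝ)/2)) 2, ← Real.rpow_mul ha]
    norm_num
  have hV0 : 0 ≤ (2 / c) ^ ((D : ℝ) - 1) * F :=
    mul_nonneg (Real.rpow_nonneg (by positivity) _) hF0
  have hsq : (∫ t in Ioi (0:ℝ), f t * g t) ^ (2:ℕ)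
      ≤ 1 / (2 * m ^ 2) * ((2 / c) ^ ((D : ℝ) - 1) * F) := by
    calc (∫ t in Ioi (0:ℝ), f t * g t) ^ (2:ℕ)
        ≤ ((1 / (2 * m ^ 2)) ^ ((1:ℝ)/2) * ((2 / c) ^ ((D : ℝ) - 1) * F) ^ ((1:ℝ)/2)) ^ (2:ℕ) :=
          pow_le_pow_left₀ hI0 hCS 2
      _ = _ := by
          rw [mul_pow, hsqr _ (by positivity), hsqr _ hV0]
  have hC0 : (0:ℝ) < (4 * π) ^ (-(D : ℝ) / 2) :=
    Real.rpow_pos_of_pos (by positivity) _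
  have hC2 : ((4 * π) ^ (-(D : ℝ) / 2) : ℝ) ^ (2:ℕ) = ((4 * π : ℝ) ^ D)⁻¹ := by
    rw [← Real.rpow_natCast ((4 * π) ^ (-(D : ℝ) / 2)) 2,
      ← Real.rpow_mul (by positivity : (0:ℝ) ≤ 4 * π)]
    rw [show (-(D:ℝ)/2) * ((2:ℕ):ℝ) = -(D:ℝ) by push_cast; ring]
    rw [Real.rpow_neg (by positivity), Real.rpow_natCast]
  have hP : (2 / c : ℝ) ^ ((D : ℝ) - 1) = 2 ^ (D - 1) * ‖x‖ ^ (-2 * (D : ℝ) + 2) := by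
    rw [Real.div_rpow (by norm_num) hc.le]
    have h2 : (2:ℝ) ^ ((D : ℝ) - 1) = 2 ^ (D - 1) := by
      rw [show ((D:ℝ) - 1) = ((D - 1 : ℕ) : ℝ) by
        rw [Nat.cast_sub (le_trans one_le_two hD)]; norm_num,
        Real.rpow_natCast]
    have h3 : (c : ℝ) ^ ((D : ℝ) - 1) = ‖x‖ ^ (2 * ((D : ℝ) - 1)) := by
      rw [hcdef, ← Real.rpow_natCast ‖x‖ 2, ← Real.rpow_mul (norm_nonneg x)]
      norm_num
    rw [h2, h3, div_eq_mul_inv, ← Real.rpow_neg (norm_nonneg x),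
      show -(2 * ((D:ℝ) - 1)) = -2 * (D:ℝ) + 2 by ring]
  have habs : |(4 * π) ^ (-(D : ℝ) / 2) *
      ∫ t in Ioi (0:ℝ), t ^ (-(D : ℝ) / 2) * Real.exp (-t * m ^ 2 - ‖x‖ ^ 2 / (4 * t))|
      = (4 * π) ^ (-(D : ℝ) / 2) * ∫ t in Ioi (0:ℝ), f t * g t := by
    rw [hIeq, abs_of_nonneg (mul_nonneg hC0.le hI0)]
  rw [habs, mul_pow]
  calc ((4 * π) ^ (-(D : ℝ) / 2)) ^ 2 * (∫ t in Ioi (0:ℝ), f t * g t) ^ 2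
      ≤ ((4 * π) ^ (-(D : ℝ) / 2)) ^ 2 * (1 / (2 * m ^ 2) * ((2 / c) ^ ((D : ℝ) - 1) * F)) := by
        exact mul_le_mul_of_nonneg_left hsq (by positivity)
    _ = 2 ^ (D - 1) / (4 * π) ^ D * (F / (2 * m ^ 2)) * ‖x‖ ^ (-2 * (D : ℝ) + 2) := by
        rw [hC2, hP]; field_simp

/-- bound and decay at infinity for the massive Euclidean propagator
`G(x) = (4π)^{-D/2} ∫₀^∞ t^{-D/2} e^{-t m² - ‖x‖²/(4t)} dt` on `ℝ^D`. -/
theorem massive_propagator_bound_and_decay (D : ℕ) (hD : 2 ≤ D) (m : ℝ) (hm : 0 < m)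
    (G : EuclideanSpace ℝ (Fin D) → ℝ)
    (hG : ∀ x : EuclideanSpace ℝ (Fin D), x ≠ 0 →
      G x = (4 * π) ^ (-(D : ℝ) / 2) *
        ∫ t in Ioi (0 : ℝ),
          t ^ (-(D : ℝ) / 2) * Real.exp (-t * m ^ 2 - ‖x‖ ^ 2 / (4 * t))) :
    (∀ x : EuclideanSpace ℝ (Fin D), x ≠ 0 →
      |G x| ^ 2 ≤ 2 ^ (D - 1) / (4 * π) ^ D * (((D - 2).factorial : ℝ) / (2 * m ^ 2)) *
        ‖x‖ ^ (-2 * (D : ℝ) + 2)) ∧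
    Tendsto G (comap norm atTop) (nhds 0) := by
  have hbd : ∀ x : EuclideanSpace ℝ (Fin D), x ≠ 0 →
      |G x| ^ 2 ≤ 2 ^ (D - 1) / (4 * π) ^ D * (((D - 2).factorial : ℝ) / (2 * m ^ 2)) *
        ‖x‖ ^ (-2 * (D : ℝ) + 2) := by
    intro x hx
    rw [hG x hx]
    exact my_bound D hD m hm x hx
  refine ⟨hbd, ?_⟩
  set K : ℝ := 2 ^ (D - 1) / (4 * π) ^ D * (((D - 2).factorial : ℝ) / (2 * m ^ 2)) with hK
  have hK0 : 0 ≤ K := by positivity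
  have hnorm : Tendsto (fun x : EuclideanSpace ℝ (Fin D) => ‖x‖) (comap norm atTop) atTop :=
    tendsto_comap
  have hDR : (0:ℝ) < 2 * (D:ℝ) - 2 := by
    have : (2:ℝ) ≤ (D:ℝ) := by exact_mod_cast hD
    linarith
  have hrp : Tendsto (fun x : EuclideanSpace ℝ (Fin D) => K * ‖x‖ ^ (-2 * (D : ℝ) + 2))
      (comap norm atTop) (nhds 0) := by
    have h1 := (tendsto_rpow_neg_atTop hDR).comp hnorm
    simp only [Function.comp_def] at h1
    have h2 : (fun x : EuclideanSpace ℝ (Fin D) => ‖x‖ ^ (-(2 * (D:ℝ) - 2)))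
        = fun x => ‖x‖ ^ (-2 * (D : ℝ) + 2) := by
      funext x; congr 1; ring
    rw [h2] at h1
    simpa using h1.const_mul K
  have hev : ∀ᶠ x : EuclideanSpace ℝ (Fin D) in comap norm atTop,
      |G x| ^ 2 ≤ K * ‖x‖ ^ (-2 * (D : ℝ) + 2) := by
    filter_upwards [hnorm.eventually (eventually_ge_atTop 1)] with x hx1
    have hx : x ≠ 0 := by
      intro h; rw [h] at hx1; simp at hx1; linarith
    exact hbd x hx
  have hsq0 : Tendsto (fun x : EuclideanSpace ℝ (Fin D) => |G x| ^ 2)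
      (comap norm atTop) (nhds 0) := by
    refine tendsto_of_tendsto_of_tendsto_of_le_of_le' tendsto_const_nhds hrp ?_ hev
    exact Eventually.of_forall fun x => by positivity
  have habs : Tendsto (fun x : EuclideanSpace ℝ (Fin D) => |G x|) (comap norm atTop) (nhds 0) := by
    have := (Real.continuous_sqrt.tendsto 0).comp hsq0
    simp only [Function.comp_def, Real.sqrt_sq_eq_abs, abs_abs, Real.sqrt_zero] at this
    exact this
  exact tendsto_zero_iff_abs_tendsto_zero G |>.mpr habs
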